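/- Let α ∈ ℕ with α ≥ 1, let ρ ∈ (0, α), set p = ρ/α, and let μ be the product Binomial measure on Ω_N = {0,…,α}^{Λ_N} given by μ(η) = Π_{x ∈ Λ_N} C(α, η(x))·p^{η(x)}·(1−p)^{α−η(x)}. Then μ is invariant for the boundary-driven symmetric partial exclusion process with equal reservoir densities ϱ₋ = ϱ₊ = ρ: for every function f : ℤ^{Λ_N} → ℝ, Σ_{η ∈ Ω_N} μ(η)·((𝓛₀ + 𝓛_b) f)(η) = 0. -/

import Mathlib

noncomputable section

/-- The configuration `δ_x` with exactly one particle, located at site `x`. -/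
def deltaZ (x : ℤ) : ℤ → ℤ := fun z => if z = x then 1 else 0

/-- The bulk generator `𝓛₀` of the symmetric partial exclusion process (the rates
`r_{x,y}(η) = η(x)(α − η(y))` correspond to `c = α`, `d = −1`). -/
def sepBulk (N : ℤ) (α : ℕ) (f : (ℤ → ℤ) → ℝ) (η : ℤ → ℤ) : ℝ :=
  ∑ x ∈ Finset.Icc (1 : ℤ) (N - 2),
    ((η x : ℝ) * ((α : ℝ) - η (x + 1)) * (f (η - deltaZ x + deltaZ (x + 1)) - f η)
      + (η (x + 1) : ℝ) * ((α : ℝ) - η x) * (f (η + deltaZ x - deltaZ (x + 1)) - f η))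

/-- The boundary generator `𝓛_b` of the symmetric partial exclusion process with
equal reservoir densities `ϱ₋ = ϱ₊ = ρ`. -/
def sepBdry (N : ℤ) (α : ℕ) (lm lp ρ : ℝ) (f : (ℤ → ℤ) → ℝ) (η : ℤ → ℤ) : ℝ :=
  lm * ρ * ((α : ℝ) - η 1) * (f (η + deltaZ 1) - f η)
    + lm * (η 1 : ℝ) * ((α : ℝ) - ρ) * (f (η - deltaZ 1) - f η)
    + lp * ρ * ((α : ℝ) - η (N - 1)) * (f (η + deltaZ (N - 1)) - f η)
    + lp * (η (N - 1) : ℝ) * ((α : ℝ) - ρ) * (f (η - deltaZ (N - 1)) - f η)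

/-- Extension of a configuration on `Λ_N = {1,…,N−1}` with values in `{0,…,α}` to a
configuration on `ℤ` (by zero outside `Λ_N`). -/
def extCfg (N : ℤ) (α : ℕ)
    (η : ((Finset.Icc (1 : ℤ) (N - 1) : Finset ℤ) : Type) →
      ((Finset.Icc (0 : ℤ) (α : ℤ) : Finset ℤ) : Type)) : ℤ → ℤ :=
  fun z => if h : z ∈ Finset.Icc (1 : ℤ) (N - 1) then ((η ⟨z, h⟩ : ℤ)) else 0

namespace SEPaux

open Finset

def B (α : ℕ) (p : ℝ) (k : ℕ) : ℝ := (α.choose k : ℝ) * p ^ k * (1 - p) ^ (α - k)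

abbrev Lam (N : ℤ) : Type := ((Finset.Icc (1 : ℤ) (N - 1) : Finset ℤ) : Type)
abbrev Val (α : ℕ) : Type := ((Finset.Icc (0 : ℤ) (α : ℤ) : Finset ℤ) : Type)
abbrev Cfg (N : ℤ) (α : ℕ) : Type := Lam N → Val α

def toV (α : ℕ) (z : ℤ) : Val α :=
  if h : z ∈ Finset.Icc (0 : ℤ) (α : ℤ) then ⟨z, h⟩ else ⟨0, by simp⟩

def μm (N : ℤ) (α : ℕ) (p : ℝ) (η : Cfg N α) : ℝ := ∏ x, B α p ((η x : ℤ)).toNat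

def addAt {N : ℤ} {α : ℕ} (a : Lam N) (η : Cfg N α) : Cfg N α :=
  Function.update η a (toV α ((η a : ℤ) + 1))

def subAt {N : ℤ} {α : ℕ} (a : Lam N) (η : Cfg N α) : Cfg N α :=
  Function.update η a (toV α ((η a : ℤ) - 1))

def mv {N : ℤ} {α : ℕ} (a b : Lam N) (η : Cfg N α) : Cfg N α :=
  Function.update (Function.update η a (toV α ((η a : ℤ) - 1))) b (toV α ((η b : ℤ) + 1))

lemma val_nonneg {α : ℕ} (v : Val α) : 0 ≤ (v : ℤ) := by
  have := v.2; rw [Finset.mem_Icc] at this; exact this.1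

lemma val_le {α : ℕ} (v : Val α) : (v : ℤ) ≤ α := by
  have := v.2; rw [Finset.mem_Icc] at this; exact this.2

lemma toV_coe (α : ℕ) (z : ℤ) (h0 : 0 ≤ z) (h1 : z ≤ α) : ((toV α z : ℤ)) = z := by
  unfold toV; rw [dif_pos (Finset.mem_Icc.mpr ⟨h0, h1⟩)]

lemma bulk_db (α n m : ℕ) (p : ℝ) (hn1 : 1 ≤ n) (hn : n ≤ α) (hm : m + 1 ≤ α) :
    B α p (n-1) * B α p (m+1) * ((((m+1) * (α - (n-1)) : ℕ)) : ℝ)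
    = B α p n * B α p m * (((n * (α - m) : ℕ)) : ℝ) := by
  have hp : p ^ (n-1) * p ^ (m+1) = p ^ n * p ^ m := by
    rw [← pow_add, ← pow_add]; congr 1; omega
  have hq : (1-p) ^ (α-(n-1)) * (1-p) ^ (α-(m+1)) = (1-p) ^ (α-n) * (1-p) ^ (α-m) := by
    rw [← pow_add, ← pow_add]; congr 1; omega
  have h2 := Nat.choose_succ_right_eq α (n-1)
  rw [show n - 1 + 1 = n by omega] at h2
  have h1 := Nat.choose_succ_right_eq α m
  have key : (α.choose (n-1) * α.choose (m+1) * ((m+1) * (α - (n-1))) : ℕ)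
      = α.choose n * α.choose m * (n * (α - m)) := by
    calc (α.choose (n-1) * α.choose (m+1) * ((m+1) * (α - (n-1))) : ℕ)
        = (α.choose (n-1) * (α - (n-1))) * (α.choose (m+1) * (m+1)) := by ring
      _ = (α.choose n * n) * (α.choose m * (α - m)) := by rw [← h2, h1]
      _ = α.choose n * α.choose m * (n * (α - m)) := by ring
  calc B α p (n-1) * B α p (m+1) * ((((m+1) * (α - (n-1)) : ℕ)) : ℝ)
      = ((α.choose (n-1) * α.choose (m+1) * ((m+1) * (α - (n-1))) : ℕ) : ℝ)
          * (p ^ (n-1) * p ^ (m+1)) * ((1-p) ^ (α-(n-1)) * (1-p) ^ (α-(m+1))) := by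
        unfold B; push_cast; ring
    _ = ((α.choose n * α.choose m * (n * (α - m)) : ℕ) : ℝ)
          * (p ^ n * p ^ m) * ((1-p) ^ (α-n) * (1-p) ^ (α-m)) := by rw [key, hp, hq]
    _ = B α p n * B α p m * (((n * (α - m) : ℕ)) : ℝ) := by unfold B; push_cast; ring

lemma bdry_db (α n : ℕ) (hα : 1 ≤ α) (hn : n + 1 ≤ α) (ρ : ℝ) :
    B α (ρ/α) (n+1) * (((n+1 : ℕ) : ℝ) * ((α : ℝ) - ρ))
    = B α (ρ/α) n * (((α - n : ℕ) : ℝ) * ρ) := by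
  have hA : (α : ℝ) ≠ 0 := by
    have : (0:ℝ) < α := by exact_mod_cast hα
    linarith
  set p := ρ / (α : ℝ) with hpdef
  have hpq : p * ((α : ℝ) - ρ) = (1 - p) * ρ := by
    rw [hpdef, mul_sub, div_mul_cancel₀ ρ hA]; ring
  have hkey := Nat.choose_succ_right_eq α n
  have hq : (1-p) ^ (α-(n+1)) * (1-p) = (1-p) ^ (α-n) := by
    rw [← pow_succ]; congr 1; omega
  calc B α p (n+1) * (((n+1 : ℕ) : ℝ) * ((α : ℝ) - ρ))
      = ((α.choose (n+1) * (n+1) : ℕ) : ℝ) * p ^ n * (1-p) ^ (α-(n+1)) * (p * ((α:ℝ) - ρ)) := by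
        unfold B; push_cast; ring
    _ = ((α.choose n * (α - n) : ℕ) : ℝ) * p ^ n * (1-p) ^ (α-(n+1)) * ((1-p) * ρ) := by
        rw [hkey, hpq]
    _ = B α p n * (((α - n : ℕ) : ℝ) * ρ) := by
        unfold B
        rw [show ((α.choose n * (α - n) : ℕ) : ℝ) * p ^ n * (1-p) ^ (α-(n+1)) * ((1-p) * ρ)
          = ((α.choose n * (α - n) : ℕ) : ℝ) * p ^ n * ((1-p) ^ (α-(n+1)) * (1-p)) * ρ by ring, hq]
        push_cast; ring

lemma transfer {S : Type*} [Fintype S] (w v : S → ℝ) (F G : S → S) (f : S → ℝ)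
    (h1 : ∀ η, w η ≠ 0 → G (F η) = η ∧ v (F η) = w η)
    (h2 : ∀ η, v η ≠ 0 → F (G η) = η ∧ w (G η) = v η) :
    ∑ η, w η * f (F η) = ∑ η, v η * f η := by
  classical
  have A : ∑ η ∈ univ.filter (fun η => w η ≠ 0), w η * f (F η) = ∑ η, w η * f (F η) := by
    apply Finset.sum_filter_of_ne
    intro η _ h hw
    exact h (by rw [hw, zero_mul])
  have Bq : ∑ η ∈ univ.filter (fun η => v η ≠ 0), v η * f η = ∑ η, v η * f η := by
    apply Finset.sum_filter_of_ne
    intro η _ h hv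
    exact h (by rw [hv, zero_mul])
  rw [← A, ← Bq]
  apply Finset.sum_nbij' (i := F) (j := G)
  · intro a ha
    simp only [mem_filter, mem_univ, true_and] at ha ⊢
    rw [(h1 a ha).2]; exact ha
  · intro b hb
    simp only [mem_filter, mem_univ, true_and] at hb ⊢
    rw [(h2 b hb).2]; exact hb
  · intro a ha
    simp only [mem_filter, mem_univ, true_and] at ha
    exact (h1 a ha).1
  · intro b hb
    simp only [mem_filter, mem_univ, true_and] at hb
    exact (h2 b hb).1
  · intro a ha
    simp only [mem_filter, mem_univ, true_and] at ha
    rw [(h1 a ha).2]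

lemma cancel {S : Type*} [Fintype S] (w v : S → ℝ) (F G : S → S) (f : S → ℝ)
    (h1 : ∀ η, w η ≠ 0 → G (F η) = η ∧ v (F η) = w η)
    (h2 : ∀ η, v η ≠ 0 → F (G η) = η ∧ w (G η) = v η) :
    ∑ η, (w η * (f (F η) - f η) + v η * (f (G η) - f η)) = 0 := by
  have T1 := transfer w v F G f h1 h2
  have T2 := transfer v w G F f h2 h1
  have : ∑ η, (w η * (f (F η) - f η) + v η * (f (G η) - f η))
      = (∑ η, w η * f (F η)) - (∑ η, w η * f η) + ((∑ η, v η * f (G η)) - (∑ η, v η * f η)) := by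
    rw [← Finset.sum_sub_distrib, ← Finset.sum_sub_distrib, ← Finset.sum_add_distrib]
    congr 1; funext η; ring
  rw [this, T1, T2]; ring

lemma prod_two {ι M : Type*} [Fintype ι] [DecidableEq ι] [CommMonoid M]
    (f : ι → M) (a b : ι) (hab : a ≠ b) :
    ∏ x, f x = f a * f b * ∏ x ∈ (Finset.univ.erase a).erase b, f x := by
  rw [← Finset.mul_prod_erase Finset.univ f (Finset.mem_univ a),
    ← Finset.mul_prod_erase (Finset.univ.erase a) f
      (Finset.mem_erase.mpr ⟨hab.symm, Finset.mem_univ b⟩), mul_assoc]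

lemma addAt_self {N : ℤ} {α : ℕ} (a : Lam N) (η : Cfg N α) (h : (η a : ℤ) + 1 ≤ α) :
    ((addAt a η a : ℤ)) = (η a : ℤ) + 1 := by
  unfold addAt
  rw [Function.update_self]
  exact toV_coe α _ (by have := val_nonneg (η a); omega) h

lemma addAt_other {N : ℤ} {α : ℕ} (a y : Lam N) (η : Cfg N α) (h : y ≠ a) :
    addAt a η y = η y := Function.update_of_ne h _ _

lemma subAt_self {N : ℤ} {α : ℕ} (a : Lam N) (η : Cfg N α) (h : 1 ≤ (η a : ℤ)) :
    ((subAt a η a : ℤ)) = (η a : ℤ) - 1 := by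
  unfold subAt
  rw [Function.update_self]
  exact toV_coe α _ (by omega) (by have := val_le (η a); omega)

lemma subAt_other {N : ℤ} {α : ℕ} (a y : Lam N) (η : Cfg N α) (h : y ≠ a) :
    subAt a η y = η y := Function.update_of_ne h _ _

lemma mv_self_b {N : ℤ} {α : ℕ} (a b : Lam N) (η : Cfg N α)
    (h2 : (η b : ℤ) + 1 ≤ α) : ((mv a b η b : ℤ)) = (η b : ℤ) + 1 := by
  unfold mv
  rw [Function.update_self]
  exact toV_coe α _ (by have := val_nonneg (η b); omega) h2

lemma mv_self_a {N : ℤ} {α : ℕ} (a b : Lam N) (hab : a ≠ b) (η : Cfg N α)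
    (h1 : 1 ≤ (η a : ℤ)) : ((mv a b η a : ℤ)) = (η a : ℤ) - 1 := by
  unfold mv
  rw [Function.update_of_ne hab _ _, Function.update_self]
  exact toV_coe α _ (by omega) (by have := val_le (η a); omega)

lemma mv_other {N : ℤ} {α : ℕ} (a b y : Lam N) (η : Cfg N α) (ha : y ≠ a) (hb : y ≠ b) :
    mv a b η y = η y := by
  unfold mv
  rw [Function.update_of_ne hb _ _, Function.update_of_ne ha _ _]

lemma sub_add_inv {N : ℤ} {α : ℕ} (a : Lam N) (η : Cfg N α) (h : (η a : ℤ) + 1 ≤ α) :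
    subAt a (addAt a η) = η := by
  funext y
  by_cases hy : y = a
  · rw [hy]
    apply Subtype.ext
    rw [subAt_self a _ (by rw [addAt_self a η h]; have := val_nonneg (η a); omega),
      addAt_self a η h]
    ring
  · rw [subAt_other a y _ hy, addAt_other a y _ hy]

lemma add_sub_inv {N : ℤ} {α : ℕ} (a : Lam N) (η : Cfg N α) (h : 1 ≤ (η a : ℤ)) :
    addAt a (subAt a η) = η := by
  funext y
  by_cases hy : y = a
  · rw [hy]
    apply Subtype.ext
    rw [addAt_self a _ (by rw [subAt_self a η h]; have := val_le (η a); omega),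
      subAt_self a η h]
    ring
  · rw [addAt_other a y _ hy, subAt_other a y _ hy]

lemma mv_inv {N : ℤ} {α : ℕ} (a b : Lam N) (hab : a ≠ b) (η : Cfg N α)
    (h1 : 1 ≤ (η a : ℤ)) (h2 : (η b : ℤ) + 1 ≤ α) :
    mv b a (mv a b η) = η := by
  funext y
  by_cases hya : y = a
  · rw [hya]
    apply Subtype.ext
    rw [mv_self_b b a (mv a b η) (by rw [mv_self_a a b hab η h1]; have := val_le (η a); omega),
      mv_self_a a b hab η h1]
    ring
  · by_cases hyb : y = b
    · rw [hyb]
      apply Subtype.ext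
      rw [mv_self_a b a (Ne.symm hab) (mv a b η)
          (by rw [mv_self_b a b η h2]; have := val_nonneg (η b); omega),
        mv_self_b a b η h2]
      ring
    · rw [mv_other b a y _ hyb hya, mv_other a b y η hya hyb]

lemma ext_mem {N : ℤ} {α : ℕ} (η : Cfg N α) (x : Lam N) :
    extCfg N α η (x : ℤ) = (η x : ℤ) := by
  unfold extCfg
  rw [dif_pos x.2]

lemma ext_addAt {N : ℤ} {α : ℕ} (a : Lam N) (η : Cfg N α) (h : (η a : ℤ) + 1 ≤ α) :
    extCfg N α (addAt a η) = extCfg N α η + deltaZ (a : ℤ) := by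
  funext z
  simp only [Pi.add_apply, deltaZ]
  by_cases hz : z ∈ Finset.Icc (1 : ℤ) (N - 1)
  · unfold extCfg
    rw [dif_pos hz, dif_pos hz]
    by_cases hza : (⟨z, hz⟩ : Lam N) = a
    · rw [if_pos (by rw [← hza]), hza, addAt_self a η h]
    · rw [if_neg (fun hc => hza (Subtype.ext hc)), addAt_other a _ η hza, add_zero]
  · unfold extCfg
    rw [dif_neg hz, dif_neg hz, if_neg (fun hc => hz (by rw [hc]; exact a.2))]
    omega

lemma ext_subAt {N : ℤ} {α : ℕ} (a : Lam N) (η : Cfg N α) (h : 1 ≤ (η a : ℤ)) :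
    extCfg N α (subAt a η) = extCfg N α η - deltaZ (a : ℤ) := by
  funext z
  simp only [Pi.sub_apply, deltaZ]
  by_cases hz : z ∈ Finset.Icc (1 : ℤ) (N - 1)
  · unfold extCfg
    rw [dif_pos hz, dif_pos hz]
    by_cases hza : (⟨z, hz⟩ : Lam N) = a
    · rw [if_pos (by rw [← hza]), hza, subAt_self a η h]
    · rw [if_neg (fun hc => hza (Subtype.ext hc)), subAt_other a _ η hza, sub_zero]
  · unfold extCfg
    rw [dif_neg hz, dif_neg hz, if_neg (fun hc => hz (by rw [hc]; exact a.2))]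
    omega

lemma ext_mv {N : ℤ} {α : ℕ} (a b : Lam N) (hab : a ≠ b) (η : Cfg N α)
    (h1 : 1 ≤ (η a : ℤ)) (h2 : (η b : ℤ) + 1 ≤ α) :
    extCfg N α (mv a b η) = extCfg N α η - deltaZ (a : ℤ) + deltaZ (b : ℤ) := by
  funext z
  simp only [Pi.sub_apply, Pi.add_apply, deltaZ]
  by_cases hz : z ∈ Finset.Icc (1 : ℤ) (N - 1)
  · unfold extCfg
    rw [dif_pos hz, dif_pos hz]
    by_cases hza : (⟨z, hz⟩ : Lam N) = a
    · have hzb' : ¬ z = (b : ℤ) := fun hc => hab (by rw [← hza]; exact Subtype.ext hc)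
      rw [if_pos (by rw [← hza]), if_neg hzb', hza, mv_self_a a b hab η h1]
      omega
    · by_cases hzb : (⟨z, hz⟩ : Lam N) = b
      · rw [if_neg (fun hc => hza (Subtype.ext hc)), if_pos (by rw [← hzb]), hzb,
          mv_self_b a b η h2]
        omega
      · rw [if_neg (fun hc => hza (Subtype.ext hc)), if_neg (fun hc => hzb (Subtype.ext hc)),
          mv_other a b _ η hza hzb]
        omega
  · unfold extCfg
    rw [dif_neg hz, dif_neg hz, if_neg (fun hc => hz (by rw [hc]; exact a.2)),
      if_neg (fun hc => hz (by rw [hc]; exact b.2))]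
    omega

lemma mu_db_bdry {N : ℤ} {α : ℕ} (hα : 1 ≤ α) (a : Lam N) (η : Cfg N α)
    (h : (η a : ℤ) + 1 ≤ α) (ρ : ℝ) :
    μm N α (ρ/α) (addAt a η) * ((((η a : ℤ) : ℝ) + 1) * ((α : ℝ) - ρ))
    = μm N α (ρ/α) η * (((α : ℝ) - ((η a : ℤ) : ℝ)) * ρ) := by
  classical
  have hcoe : ((η a : ℤ)) = (((η a : ℤ)).toNat : ℤ) := (Int.toNat_of_nonneg (val_nonneg _)).symm
  set n := ((η a : ℤ)).toNat with hn
  have hn1 : n + 1 ≤ α := by omega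
  have hval : ((addAt a η a : ℤ)).toNat = n + 1 := by
    rw [addAt_self a η h]; omega
  have hμ2 : μm N α (ρ/α) (addAt a η)
      = B α (ρ/α) (n+1) * ∏ y ∈ univ.erase a, B α (ρ/α) ((η y : ℤ)).toNat := by
    rw [μm, ← Finset.mul_prod_erase Finset.univ _ (Finset.mem_univ a), hval]
    congr 1
    exact Finset.prod_congr rfl fun y hy => by rw [addAt_other a y η (Finset.ne_of_mem_erase hy)]
  have hμ1 : μm N α (ρ/α) η
      = B α (ρ/α) n * ∏ y ∈ univ.erase a, B α (ρ/α) ((η y : ℤ)).toNat := by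
    rw [μm, ← Finset.mul_prod_erase Finset.univ _ (Finset.mem_univ a)]
  have hdb := bdry_db α n hα hn1 ρ
  rw [Nat.cast_sub (by omega)] at hdb
  push_cast at hdb
  rw [hμ1, hμ2, hcoe]
  push_cast
  linear_combination (∏ y ∈ univ.erase a, B α (ρ/α) ((η y : ℤ)).toNat) * hdb

lemma mu_db_bulk {N : ℤ} {α : ℕ} (a b : Lam N) (hab : a ≠ b) (η : Cfg N α)
    (h1 : 1 ≤ (η a : ℤ)) (h2 : (η b : ℤ) + 1 ≤ α) (p : ℝ) :
    μm N α p (mv a b η) * ((((η b : ℤ) : ℝ) + 1) * ((α : ℝ) - (((η a : ℤ) : ℝ) - 1)))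
    = μm N α p η * (((η a : ℤ) : ℝ) * ((α : ℝ) - ((η b : ℤ) : ℝ))) := by
  classical
  have hca : ((η a : ℤ)) = (((η a : ℤ)).toNat : ℤ) := (Int.toNat_of_nonneg (val_nonneg _)).symm
  have hcb : ((η b : ℤ)) = (((η b : ℤ)).toNat : ℤ) := (Int.toNat_of_nonneg (val_nonneg _)).symm
  set n := ((η a : ℤ)).toNat with hn
  set m := ((η b : ℤ)).toNat with hm
  have hnα : n ≤ α := by have := val_le (η a); omega
  have hn1 : 1 ≤ n := by omega
  have hm1 : m + 1 ≤ α := by omega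
  have hva : ((mv a b η a : ℤ)).toNat = n - 1 := by rw [mv_self_a a b hab η h1]; omega
  have hvb : ((mv a b η b : ℤ)).toNat = m + 1 := by rw [mv_self_b a b η h2]; omega
  have hμ2 : μm N α p (mv a b η)
      = B α p (n-1) * B α p (m+1) * ∏ y ∈ (univ.erase a).erase b, B α p ((η y : ℤ)).toNat := by
    rw [μm, prod_two _ a b hab, hva, hvb]
    congr 1
    refine Finset.prod_congr rfl fun y hy => ?_
    have hyb : y ≠ b := (Finset.mem_erase.mp hy).1
    have hya : y ≠ a := (Finset.mem_erase.mp (Finset.mem_of_mem_erase hy)).1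
    rw [mv_other a b y η hya hyb]
  have hμ1 : μm N α p η
      = B α p n * B α p m * ∏ y ∈ (univ.erase a).erase b, B α p ((η y : ℤ)).toNat := by
    rw [μm, prod_two _ a b hab]
  have hdb := bulk_db α n m p hn1 hnα hm1
  have e1 : (((m+1) * (α - (n-1)) : ℕ) : ℝ) = ((m:ℝ)+1) * ((α:ℝ) - ((n:ℝ)-1)) := by
    rw [Nat.cast_mul, Nat.cast_sub (by omega), Nat.cast_sub hn1]; push_cast; ring
  have e2 : ((n * (α - m) : ℕ) : ℝ) = (n:ℝ) * ((α:ℝ) - (m:ℝ)) := by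
    rw [Nat.cast_mul, Nat.cast_sub (by omega)]
  rw [e1, e2] at hdb
  rw [hμ1, hμ2, hca, hcb]
  push_cast
  linear_combination (∏ y ∈ (univ.erase a).erase b, B α p ((η y : ℤ)).toNat) * hdb

def wB (N : ℤ) (α : ℕ) (p : ℝ) (a b : Lam N) (η : Cfg N α) : ℝ :=
  μm N α p η * (((η a : ℤ) : ℝ) * ((α : ℝ) - ((η b : ℤ) : ℝ)))

def gf (N : ℤ) (α : ℕ) (f : (ℤ → ℤ) → ℝ) (η : Cfg N α) : ℝ := f (extCfg N α η)

lemma bulk_h1 {N : ℤ} {α : ℕ} (p : ℝ) (a b : Lam N) (hab : a ≠ b) :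
    ∀ η : Cfg N α, wB N α p a b η ≠ 0 →
      mv b a (mv a b η) = η ∧ wB N α p b a (mv a b η) = wB N α p a b η := by
  intro η hne
  have h1' : 1 ≤ (η a : ℤ) := by
    by_contra hc
    have h0 : (η a : ℤ) = 0 := by have := val_nonneg (η a); omega
    apply hne
    unfold wB
    rw [h0]
    push_cast
    ring
  have h2' : (η b : ℤ) + 1 ≤ α := by
    by_contra hc
    have h0 : (η b : ℤ) = (α : ℤ) := by have := val_le (η b); omega
    apply hne
    unfold wB
    rw [h0]
    push_cast
    ring
  refine ⟨mv_inv a b hab η h1' h2', ?_⟩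
  have hdb := mu_db_bulk a b hab η h1' h2' p
  unfold wB
  rw [mv_self_b a b η h2', mv_self_a a b hab η h1']
  push_cast at hdb ⊢
  linear_combination hdb

lemma bulk_pair_zero (N : ℤ) (α : ℕ) (p : ℝ) (f : (ℤ → ℤ) → ℝ) (x : ℤ)
    (hx1 : 1 ≤ x) (hx2 : x ≤ N - 2) :
    ∑ η : Cfg N α, μm N α p η *
      ((extCfg N α η x : ℝ) * ((α : ℝ) - extCfg N α η (x + 1)) *
          (f (extCfg N α η - deltaZ x + deltaZ (x + 1)) - f (extCfg N α η))
        + (extCfg N α η (x + 1) : ℝ) * ((α : ℝ) - extCfg N α η x) *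
          (f (extCfg N α η + deltaZ x - deltaZ (x + 1)) - f (extCfg N α η))) = 0 := by
  classical
  have ha : x ∈ Finset.Icc (1 : ℤ) (N - 1) := by rw [Finset.mem_Icc]; omega
  have hb : x + 1 ∈ Finset.Icc (1 : ℤ) (N - 1) := by rw [Finset.mem_Icc]; omega
  set a : Lam N := ⟨x, ha⟩ with hadef
  set b : Lam N := ⟨x + 1, hb⟩ with hbdef
  have hab : a ≠ b := by
    intro hc
    have h' : x = x + 1 := congrArg Subtype.val hc
    omega
  have main : ∀ η : Cfg N α, μm N α p η *
      ((extCfg N α η x : ℝ) * ((α : ℝ) - extCfg N α η (x + 1)) *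
          (f (extCfg N α η - deltaZ x + deltaZ (x + 1)) - f (extCfg N α η))
        + (extCfg N α η (x + 1) : ℝ) * ((α : ℝ) - extCfg N α η x) *
          (f (extCfg N α η + deltaZ x - deltaZ (x + 1)) - f (extCfg N α η)))
      = wB N α p a b η * (gf N α f (mv a b η) - gf N α f η)
        + wB N α p b a η * (gf N α f (mv b a η) - gf N α f η) := by
    intro η
    have ea : extCfg N α η x = ((η a : ℤ)) := ext_mem η a
    have eb : extCfg N α η (x + 1) = ((η b : ℤ)) := ext_mem η b
    have first : μm N α p η *
        ((extCfg N α η x : ℝ) * ((α : ℝ) - extCfg N α η (x + 1)) *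
          (f (extCfg N α η - deltaZ x + deltaZ (x + 1)) - f (extCfg N α η)))
        = wB N α p a b η * (gf N α f (mv a b η) - gf N α f η) := by
      rw [ea, eb]
      unfold wB gf
      by_cases hza : (η a : ℤ) = 0
      · rw [hza]; push_cast; ring
      · by_cases hzb : (η b : ℤ) = (α : ℤ)
        · rw [hzb]; push_cast; ring
        · have h1' : 1 ≤ (η a : ℤ) := by have := val_nonneg (η a); omega
          have h2' : (η b : ℤ) + 1 ≤ α := by have := val_le (η b); omega
          have hext : extCfg N α η - deltaZ x + deltaZ (x + 1) = extCfg N α (mv a b η) :=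
            (ext_mv a b hab η h1' h2').symm
          rw [hext]
          ring
    have second : μm N α p η *
        ((extCfg N α η (x + 1) : ℝ) * ((α : ℝ) - extCfg N α η x) *
          (f (extCfg N α η + deltaZ x - deltaZ (x + 1)) - f (extCfg N α η)))
        = wB N α p b a η * (gf N α f (mv b a η) - gf N α f η) := by
      rw [ea, eb]
      unfold wB gf
      by_cases hzb : (η b : ℤ) = 0
      · rw [hzb]; push_cast; ring
      · by_cases hza : (η a : ℤ) = (α : ℤ)
        · rw [hza]; push_cast; ring
        · have h1' : 1 ≤ (η b : ℤ) := by have := val_nonneg (η b); omega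
          have h2' : (η a : ℤ) + 1 ≤ α := by have := val_le (η a); omega
          have hext : extCfg N α η + deltaZ x - deltaZ (x + 1) = extCfg N α (mv b a η) := by
            rw [ext_mv b a (Ne.symm hab) η h1' h2']
            exact (sub_add_eq_add_sub _ _ _).symm
          rw [hext]
          ring
    calc μm N α p η *
        ((extCfg N α η x : ℝ) * ((α : ℝ) - extCfg N α η (x + 1)) *
            (f (extCfg N α η - deltaZ x + deltaZ (x + 1)) - f (extCfg N α η))
          + (extCfg N α η (x + 1) : ℝ) * ((α : ℝ) - extCfg N α η x) *
            (f (extCfg N α η + deltaZ x - deltaZ (x + 1)) - f (extCfg N α η)))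
        = μm N α p η *
          ((extCfg N α η x : ℝ) * ((α : ℝ) - extCfg N α η (x + 1)) *
            (f (extCfg N α η - deltaZ x + deltaZ (x + 1)) - f (extCfg N α η)))
          + μm N α p η *
          ((extCfg N α η (x + 1) : ℝ) * ((α : ℝ) - extCfg N α η x) *
            (f (extCfg N α η + deltaZ x - deltaZ (x + 1)) - f (extCfg N α η))) := by ring
      _ = _ := by rw [first, second]
  calc (∑ η : Cfg N α, μm N α p η *
      ((extCfg N α η x : ℝ) * ((α : ℝ) - extCfg N α η (x + 1)) *
          (f (extCfg N α η - deltaZ x + deltaZ (x + 1)) - f (extCfg N α η))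
        + (extCfg N α η (x + 1) : ℝ) * ((α : ℝ) - extCfg N α η x) *
          (f (extCfg N α η + deltaZ x - deltaZ (x + 1)) - f (extCfg N α η))))
      = ∑ η : Cfg N α, (wB N α p a b η * (gf N α f (mv a b η) - gf N α f η)
        + wB N α p b a η * (gf N α f (mv b a η) - gf N α f η)) :=
        Finset.sum_congr rfl fun η _ => main η
    _ = 0 := cancel (wB N α p a b) (wB N α p b a) (mv a b) (mv b a) (gf N α f)
        (bulk_h1 p a b hab) (bulk_h1 p b a (Ne.symm hab))

def wAdd (N : ℤ) (α : ℕ) (lam ρ : ℝ) (a : Lam N) (η : Cfg N α) : ℝ :=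
  μm N α (ρ/α) η * (lam * ρ * ((α : ℝ) - ((η a : ℤ) : ℝ)))

def wSub (N : ℤ) (α : ℕ) (lam ρ : ℝ) (a : Lam N) (η : Cfg N α) : ℝ :=
  μm N α (ρ/α) η * (lam * ((η a : ℤ) : ℝ) * ((α : ℝ) - ρ))

lemma bdry_h1 {N : ℤ} {α : ℕ} (hα : 1 ≤ α) (lam ρ : ℝ) (a : Lam N) :
    ∀ η : Cfg N α, wAdd N α lam ρ a η ≠ 0 →
      subAt a (addAt a η) = η ∧ wSub N α lam ρ a (addAt a η) = wAdd N α lam ρ a η := by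
  intro η hne
  have hle : (η a : ℤ) + 1 ≤ α := by
    by_contra hc
    have h0 : (η a : ℤ) = (α : ℤ) := by have := val_le (η a); omega
    apply hne
    unfold wAdd
    rw [h0]
    push_cast
    ring
  refine ⟨sub_add_inv a η hle, ?_⟩
  have hdb := mu_db_bdry hα a η hle ρ
  unfold wSub wAdd
  rw [addAt_self a η hle]
  push_cast at hdb ⊢
  linear_combination lam * hdb

lemma bdry_h2 {N : ℤ} {α : ℕ} (hα : 1 ≤ α) (lam ρ : ℝ) (a : Lam N) :
    ∀ η : Cfg N α, wSub N α lam ρ a η ≠ 0 →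
      addAt a (subAt a η) = η ∧ wAdd N α lam ρ a (subAt a η) = wSub N α lam ρ a η := by
  intro η hne
  have h1' : 1 ≤ (η a : ℤ) := by
    by_contra hc
    have h0 : (η a : ℤ) = 0 := by have := val_nonneg (η a); omega
    apply hne
    unfold wSub
    rw [h0]
    push_cast
    ring
  refine ⟨add_sub_inv a η h1', ?_⟩
  have hle' : ((subAt a η a : ℤ)) + 1 ≤ α := by
    rw [subAt_self a η h1']
    have := val_le (η a); omega
  have hdb := mu_db_bdry hα a (subAt a η) hle' ρ
  rw [add_sub_inv a η h1', subAt_self a η h1'] at hdb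
  unfold wAdd wSub
  rw [subAt_self a η h1']
  push_cast at hdb ⊢
  linear_combination (-lam) * hdb

lemma bdry_pair_zero (N : ℤ) (α : ℕ) (hα : 1 ≤ α) (ρ lam : ℝ) (f : (ℤ → ℤ) → ℝ)
    (s : ℤ) (hs : s ∈ Finset.Icc (1 : ℤ) (N - 1)) :
    ∑ η : Cfg N α, μm N α (ρ/α) η *
      (lam * ρ * ((α : ℝ) - extCfg N α η s) *
          (f (extCfg N α η + deltaZ s) - f (extCfg N α η))
        + lam * (extCfg N α η s : ℝ) * ((α : ℝ) - ρ) *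
          (f (extCfg N α η - deltaZ s) - f (extCfg N α η))) = 0 := by
  classical
  set a : Lam N := ⟨s, hs⟩ with hadef
  have main : ∀ η : Cfg N α, μm N α (ρ/α) η *
      (lam * ρ * ((α : ℝ) - extCfg N α η s) *
          (f (extCfg N α η + deltaZ s) - f (extCfg N α η))
        + lam * (extCfg N α η s : ℝ) * ((α : ℝ) - ρ) *
          (f (extCfg N α η - deltaZ s) - f (extCfg N α η)))
      = wAdd N α lam ρ a η * (gf N α f (addAt a η) - gf N α f η)
        + wSub N α lam ρ a η * (gf N α f (subAt a η) - gf N α f η) := by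
    intro η
    have ea : extCfg N α η s = ((η a : ℤ)) := ext_mem η a
    have first : μm N α (ρ/α) η *
        (lam * ρ * ((α : ℝ) - extCfg N α η s) *
          (f (extCfg N α η + deltaZ s) - f (extCfg N α η)))
        = wAdd N α lam ρ a η * (gf N α f (addAt a η) - gf N α f η) := by
      rw [ea]
      unfold wAdd gf
      by_cases hza : (η a : ℤ) = (α : ℤ)
      · rw [hza]; push_cast; ring
      · have hle : (η a : ℤ) + 1 ≤ α := by have := val_le (η a); omega
        have hext : extCfg N α η + deltaZ s = extCfg N α (addAt a η) :=
          (ext_addAt a η hle).symm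
        rw [hext]
        ring
    have second : μm N α (ρ/α) η *
        (lam * (extCfg N α η s : ℝ) * ((α : ℝ) - ρ) *
          (f (extCfg N α η - deltaZ s) - f (extCfg N α η)))
        = wSub N α lam ρ a η * (gf N α f (subAt a η) - gf N α f η) := by
      rw [ea]
      unfold wSub gf
      by_cases hza : (η a : ℤ) = 0
      · rw [hza]; push_cast; ring
      · have h1' : 1 ≤ (η a : ℤ) := by have := val_nonneg (η a); omega
        have hext : extCfg N α η - deltaZ s = extCfg N α (subAt a η) :=
          (ext_subAt a η h1').symm
        rw [hext]
        ring
    calc μm N α (ρ/α) η *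
        (lam * ρ * ((α : ℝ) - extCfg N α η s) *
            (f (extCfg N α η + deltaZ s) - f (extCfg N α η))
          + lam * (extCfg N α η s : ℝ) * ((α : ℝ) - ρ) *
            (f (extCfg N α η - deltaZ s) - f (extCfg N α η)))
        = μm N α (ρ/α) η *
            (lam * ρ * ((α : ℝ) - extCfg N α η s) *
              (f (extCfg N α η + deltaZ s) - f (extCfg N α η)))
          + μm N α (ρ/α) η *
            (lam * (extCfg N α η s : ℝ) * ((α : ℝ) - ρ) *
              (f (extCfg N α η - deltaZ s) - f (extCfg N α η))) := by ring
      _ = _ := by rw [first, second]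
  calc (∑ η : Cfg N α, μm N α (ρ/α) η *
      (lam * ρ * ((α : ℝ) - extCfg N α η s) *
          (f (extCfg N α η + deltaZ s) - f (extCfg N α η))
        + lam * (extCfg N α η s : ℝ) * ((α : ℝ) - ρ) *
          (f (extCfg N α η - deltaZ s) - f (extCfg N α η))))
      = ∑ η : Cfg N α, (wAdd N α lam ρ a η * (gf N α f (addAt a η) - gf N α f η)
        + wSub N α lam ρ a η * (gf N α f (subAt a η) - gf N α f η)) :=
        Finset.sum_congr rfl fun η _ => main η
    _ = 0 := cancel (wAdd N α lam ρ a) (wSub N α lam ρ a) (addAt a) (subAt a) (gf N α f)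
        (bdry_h1 hα lam ρ a) (bdry_h2 hα lam ρ a)

end SEPaux

open SEPaux

/-- With `p = ρ/α`, the product Binomial`(α, p)` measure on
`Ω_N = {0,…,α}^{Λ_N}` is invariant for the boundary-driven symmetric partial exclusion
process with equal reservoir densities `ϱ₋ = ϱ₊ = ρ`: for every `f : ℤ^{Λ_N} → ℝ`,
`Σ_{η ∈ Ω_N} μ(η) ((𝓛₀ + 𝓛_b) f)(η) = 0`. -/
theorem sep_binomial_invariant (N : ℤ) (hN : 5 ≤ N) (α : ℕ) (hα : 1 ≤ α)
    (ρ : ℝ) (hρ0 : 0 < ρ) (hρα : ρ < α)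
    (lm lp : ℝ) (hlm0 : 0 < lm) (hlm1 : lm ≤ 1) (hlp0 : 0 < lp) (hlp1 : lp ≤ 1)
    (f : (ℤ → ℤ) → ℝ) :
    ∑ η : ((Finset.Icc (1 : ℤ) (N - 1) : Finset ℤ) : Type) →
        ((Finset.Icc (0 : ℤ) (α : ℤ) : Finset ℤ) : Type),
      (∏ x : ((Finset.Icc (1 : ℤ) (N - 1) : Finset ℤ) : Type),
          ((α.choose ((η x : ℤ)).toNat : ℝ) * (ρ / α) ^ ((η x : ℤ)).toNat
            * (1 - ρ / α) ^ (α - ((η x : ℤ)).toNat)))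
        * (sepBulk N α f (extCfg N α η) + sepBdry N α lm lp ρ f (extCfg N α η)) = 0 := by
  classical
  have hmem1 : (1 : ℤ) ∈ Finset.Icc (1 : ℤ) (N - 1) := by rw [Finset.mem_Icc]; omega
  have hmemN : (N - 1 : ℤ) ∈ Finset.Icc (1 : ℤ) (N - 1) := by rw [Finset.mem_Icc]; omega
  show ∑ η : Cfg N α, μm N α (ρ/α) η *
      (sepBulk N α f (extCfg N α η) + sepBdry N α lm lp ρ f (extCfg N α η)) = 0
  calc ∑ η : Cfg N α, μm N α (ρ/α) η *
        (sepBulk N α f (extCfg N α η) + sepBdry N α lm lp ρ f (extCfg N α η))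
      = ∑ η : Cfg N α,
        ((∑ x ∈ Finset.Icc (1 : ℤ) (N - 2), μm N α (ρ/α) η *
          ((extCfg N α η x : ℝ) * ((α : ℝ) - extCfg N α η (x + 1)) *
              (f (extCfg N α η - deltaZ x + deltaZ (x + 1)) - f (extCfg N α η))
            + (extCfg N α η (x + 1) : ℝ) * ((α : ℝ) - extCfg N α η x) *
              (f (extCfg N α η + deltaZ x - deltaZ (x + 1)) - f (extCfg N α η))))
        + (μm N α (ρ/α) η *
            (lm * ρ * ((α : ℝ) - extCfg N α η 1) *
                (f (extCfg N α η + deltaZ 1) - f (extCfg N α η))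
              + lm * (extCfg N α η 1 : ℝ) * ((α : ℝ) - ρ) *
                (f (extCfg N α η - deltaZ 1) - f (extCfg N α η)))
          + μm N α (ρ/α) η *
            (lp * ρ * ((α : ℝ) - extCfg N α η (N - 1)) *
                (f (extCfg N α η + deltaZ (N - 1)) - f (extCfg N α η))
              + lp * (extCfg N α η (N - 1) : ℝ) * ((α : ℝ) - ρ) *
                (f (extCfg N α η - deltaZ (N - 1)) - f (extCfg N α η))))) := by
        refine Finset.sum_congr rfl fun η _ => ?_
        unfold sepBulk sepBdry
        rw [mul_add, Finset.mul_sum]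
        ring
    _ = (∑ η : Cfg N α, ∑ x ∈ Finset.Icc (1 : ℤ) (N - 2), μm N α (ρ/α) η *
          ((extCfg N α η x : ℝ) * ((α : ℝ) - extCfg N α η (x + 1)) *
              (f (extCfg N α η - deltaZ x + deltaZ (x + 1)) - f (extCfg N α η))
            + (extCfg N α η (x + 1) : ℝ) * ((α : ℝ) - extCfg N α η x) *
              (f (extCfg N α η + deltaZ x - deltaZ (x + 1)) - f (extCfg N α η))))
        + ((∑ η : Cfg N α, μm N α (ρ/α) η *
            (lm * ρ * ((α : ℝ) - extCfg N α η 1) *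
                (f (extCfg N α η + deltaZ 1) - f (extCfg N α η))
              + lm * (extCfg N α η 1 : ℝ) * ((α : ℝ) - ρ) *
                (f (extCfg N α η - deltaZ 1) - f (extCfg N α η))))
          + (∑ η : Cfg N α, μm N α (ρ/α) η *
            (lp * ρ * ((α : ℝ) - extCfg N α η (N - 1)) *
                (f (extCfg N α η + deltaZ (N - 1)) - f (extCfg N α η))
              + lp * (extCfg N α η (N - 1) : ℝ) * ((α : ℝ) - ρ) *
                (f (extCfg N α η - deltaZ (N - 1)) - f (extCfg N α η))))) := by
        rw [Finset.sum_add_distrib, Finset.sum_add_distrib]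
    _ = 0 := by
        rw [Finset.sum_comm,
          Finset.sum_eq_zero (fun x hx => bulk_pair_zero N α (ρ/α) f x
            (Finset.mem_Icc.mp hx).1 (Finset.mem_Icc.mp hx).2),
          bdry_pair_zero N α hα ρ lm f 1 hmem1,
          bdry_pair_zero N α hα ρ lp f (N - 1) hmemN]
        norm_num


end
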